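/- Let q₀ ≥ ⋯ ≥ q_{n−1} be reals, m ≥ 1, n ≥ 2m+1, b > 0. Suppose r with n−m ≤ r ≤ n−1 is the largest integer ≤ n satisfying w* ≤ (1/(n−m))·((n−r)·q_{m−1} + Σ_{h=m}^{r−1} q_h), and define c = ((n−m)·w* − Σ_{h=m}^{r−1} q_h)/(n−r). Append m−n+r copies of q_{n−1} − b and n−r copies of c to the sequence. If additionally q_r < c ≤ q_{m−1}, then the m-trimmed mean of the resulting n+m values equals w*. -/

import Mathlib

open Finset

/-- Median of a multiset of reals: average of the two middle order statistics
(equal to the middle one for odd cardinality). -/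
noncomputable def med (s : Multiset ℝ) : ℝ :=
  ((s.sort (· ≤ ·)).getD ((Multiset.card s - 1) / 2) 0 +
    (s.sort (· ≤ ·)).getD (Multiset.card s / 2) 0) / 2

/-- `m`-trimmed mean: remove the `m` largest and `m` smallest values and average the rest. -/
noncomputable def trimmedMean (m : ℕ) (s : Multiset ℝ) : ℝ :=
  ((((s.sort (· ≤ ·)).drop m).take (Multiset.card s - 2 * m)).sum) /
    ((Multiset.card s : ℝ) - 2 * m)

/-- The multiset of the first `n` values of `q`. -/
noncomputable def qMs (n : ℕ) (q : ℕ → ℝ) : Multiset ℝ :=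
  (Finset.range n).val.map q

lemma sort_append_of_le (a t : Multiset ℝ) (h : ∀ x ∈ a, ∀ y ∈ t, x ≤ y) :
    (a + t).sort (· ≤ ·) = a.sort (· ≤ ·) ++ t.sort (· ≤ ·) := by
  refine (fun hp h1 h2 => List.Perm.eq_of_pairwise' (r := (· ≤ ·)) h1 h2 hp) ?_ ?_ ?_
  · rw [← Multiset.coe_eq_coe]
    simp [← Multiset.coe_add, Multiset.sort_eq]
  · exact Multiset.pairwise_sort _ _
  · rw [List.pairwise_append]
    refine ⟨Multiset.pairwise_sort _ _, Multiset.pairwise_sort _ _, ?_⟩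
    intro x hx y hy
    exact h x (Multiset.mem_sort _ |>.1 hx) y (Multiset.mem_sort _ |>.1 hy)

theorem stmt14 (n m : ℕ) (hm : 1 ≤ m) (hn : 2 * m + 1 ≤ n) (q : ℕ → ℝ)
    (hq : ∀ i j, i ≤ j → j < n → q j ≤ q i) (b wstar : ℝ) (hb : 0 < b)
    (r : ℕ) (hr1 : n - m ≤ r) (hr2 : r ≤ n - 1)
    (hrineq : wstar ≤ (1 / ((n : ℝ) - m)) *
      (((n : ℝ) - r) * q (m - 1) + ∑ h ∈ Finset.Ico m r, q h))
    (hrmax : ∀ r' : ℕ, r' ≤ n →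
      wstar ≤ (1 / ((n : ℝ) - m)) *
        (((n : ℝ) - r') * q (m - 1) + ∑ h ∈ Finset.Ico m r', q h) → r' ≤ r)
    (c : ℝ)
    (hc : c = (((n : ℝ) - m) * wstar - ∑ h ∈ Finset.Ico m r, q h) / ((n : ℝ) - r))
    (hc1 : q r < c) (hc2 : c ≤ q (m - 1)) :
    trimmedMean m (qMs n q + (Multiset.replicate (m + r - n) (q (n - 1) - b) +
      Multiset.replicate (n - r) c)) = wstar := by
  have hmr : m < r := by omega
  have hrn : r < n := by omega
  set d := q (n - 1) - b with hd
  set low : Multiset ℝ := Multiset.replicate (m + r - n) d + (Finset.Ico r n).val.map q with hlow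
  set mid : Multiset ℝ := Multiset.replicate (n - r) c + (Finset.Ico m r).val.map q with hmid
  set high : Multiset ℝ := (Finset.range m).val.map q with hhigh
  -- decomposition of the multiset
  have hsplit : qMs n q + (Multiset.replicate (m + r - n) d + Multiset.replicate (n - r) c)
      = low + (mid + high) := by
    have hrg : ∀ k, (Finset.range k).val = (Finset.Ico 0 k).val := by
      intro k; rw [Finset.range_eq_Ico]
    have h1 : (Finset.range n).val = (Finset.range m).val + (Finset.Ico m r).val
        + (Finset.Ico r n).val := by
      rw [hrg n, hrg m]
      show Multiset.Ico 0 n = Multiset.Ico 0 m + Multiset.Ico m r + Multiset.Ico r n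
      rw [Multiset.Ico_add_Ico_eq_Ico (Nat.zero_le m) hmr.le,
        Multiset.Ico_add_Ico_eq_Ico (Nat.zero_le r) hrn.le]
    rw [qMs, h1]
    simp only [Multiset.map_add, hlow, hmid, hhigh]
    abel
  rw [hsplit]
  -- basic facts about elements
  have hmem_low : ∀ x ∈ low, x ≤ q r := by
    intro x hx
    rcases Multiset.mem_add.1 hx with hx | hx
    · rcases Multiset.mem_replicate.1 hx with ⟨-, rfl⟩
      have := hq r (n - 1) (by omega) (by omega)
      rw [hd]; linarith
    · rcases Multiset.mem_map.1 hx with ⟨i, hi, rfl⟩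
      rw [Finset.mem_val, Finset.mem_Ico] at hi
      exact hq r i hi.1 hi.2
  have hmem_mid : ∀ x ∈ mid, q r ≤ x ∧ x ≤ q (m - 1) := by
    intro x hx
    rcases Multiset.mem_add.1 hx with hx | hx
    · rcases Multiset.mem_replicate.1 hx with ⟨-, rfl⟩
      exact ⟨hc1.le, hc2⟩
    · rcases Multiset.mem_map.1 hx with ⟨i, hi, rfl⟩
      rw [Finset.mem_val, Finset.mem_Ico] at hi
      exact ⟨hq i r hi.2.le hrn, hq (m - 1) i (by omega) (by omega)⟩
  have hmem_high : ∀ x ∈ high, q (m - 1) ≤ x := by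
    intro x hx
    rcases Multiset.mem_map.1 hx with ⟨i, hi, rfl⟩
    rw [Finset.mem_val, Finset.mem_range] at hi
    exact hq i (m - 1) (by omega) (by omega)
  -- sort decomposes
  have hlm : ∀ x ∈ low, ∀ y ∈ mid + high, x ≤ y := by
    intro x hx y hy
    rcases Multiset.mem_add.1 hy with hy | hy
    · exact le_trans (hmem_low x hx) (hmem_mid y hy).1
    · exact le_trans (hmem_low x hx) (le_trans (hq r (n - 1) (by omega) (by omega)
        |> fun _ => le_trans (hq (m - 1) r (by omega) hrn) (hmem_high y hy)) le_rfl)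
  have hmh : ∀ x ∈ mid, ∀ y ∈ high, x ≤ y := by
    intro x hx y hy
    exact le_trans (hmem_mid x hx).2 (hmem_high y hy)
  have hsort : (low + (mid + high)).sort (· ≤ ·)
      = low.sort (· ≤ ·) ++ (mid.sort (· ≤ ·) ++ high.sort (· ≤ ·)) := by
    rw [sort_append_of_le low (mid + high) hlm, sort_append_of_le mid high hmh]
  -- cardinalities
  have hcard_low : (low.sort (· ≤ ·)).length = m := by
    rw [Multiset.length_sort]
    simp [hlow, Nat.card_Ico]
    omega
  have hcard_mid : (mid.sort (· ≤ ·)).length = n - m := by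
    rw [Multiset.length_sort]
    simp [hmid, Nat.card_Ico]
    omega
  have hcard : Multiset.card (low + (mid + high)) = n + m := by
    simp [hlow, hmid, hhigh, Nat.card_Ico]
    omega
  rw [trimmedMean, hsort, hcard, List.drop_left' hcard_low]
  have h2m : n + m - 2 * m = n - m := by omega
  rw [h2m, List.take_left' hcard_mid]
  -- sum of middle block
  have hsum : (mid.sort (· ≤ ·)).sum = mid.sum := by
    conv_rhs => rw [← Multiset.sort_eq mid (· ≤ ·)]
    rfl
  rw [hsum]
  have hmidsum : mid.sum = ((n : ℝ) - r) * c + ∑ h ∈ Finset.Ico m r, q h := by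
    rw [hmid]
    rw [Multiset.sum_add, Multiset.sum_replicate, nsmul_eq_mul]
    have : ((n - r : ℕ) : ℝ) = (n : ℝ) - r := by
      push_cast [Nat.cast_sub hrn.le]; ring
    rw [this]
    rfl
  rw [hmidsum]
  have hnr : (n : ℝ) - r ≠ 0 := by
    have : (r : ℝ) < n := by exact_mod_cast hrn
    linarith
  have hnm : (n : ℝ) - m ≠ 0 := by
    have : (m : ℝ) < n := by exact_mod_cast (by omega : m < n)
    linarith
  have hnum : ((n : ℝ) - r) * c + ∑ h ∈ Finset.Ico m r, q h = ((n : ℝ) - m) * wstar := by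
    rw [hc]
    field_simp
    ring
  rw [hnum]
  push_cast
  rw [show (n : ℝ) + m - 2 * m = (n : ℝ) - m by ring, mul_comm, mul_div_assoc,
    div_self hnm, mul_one]
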